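/- If a winning event has probability greater than exp(−nδ) under a strategy, then under the conditioned (changed) measure the approximate-nonsignalling constraint holds: for each A ⊊ M, I(Ũ_Aⁿ ∧ X̃_{A^c}ⁿ | X̃_Aⁿ) + D(P̃_{X_Mⁿ} ‖ P_{X_M}ⁿ) ≤ D(P̃_{U_Mⁿ X_Mⁿ} ‖ P_{U_Mⁿ X_Mⁿ}) ≤ nδ, where P̃ denotes the joint measure conditioned on the winning event C and P_{U_Mⁿ|X_Mⁿ} is a sub-nonsignalling strategy. -/

import Mathlib

open Finset

/-- A probability mass function on a finite set. -/
def IsPmf {α : Type*} [Fintype α] (P : α → ℝ) : Prop :=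
  (∀ x, 0 ≤ P x) ∧ ∑ x, P x = 1

/-- Marginal (pushforward) of a measure `P` along a map `f`. -/
noncomputable def marg {α β : Type*} [Fintype α] [DecidableEq β]
    (f : α → β) (P : α → ℝ) : β → ℝ :=
  fun y => ∑ x, if f x = y then P x else 0

/-- KL divergence in nats, with the convention `0 · log 0 = 0` (and `x/0 = 0`). -/
noncomputable def klDiv {α : Type*} [Fintype α] (Q P : α → ℝ) : ℝ :=
  ∑ x, Q x * Real.log (Q x / P x)

/-- Conditional mutual information `I(a(Z) ∧ b(Z) | c(Z))` in nats, for `Z ∼ T`. -/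
noncomputable def condMI {γ α β σ : Type*} [Fintype γ]
    [Fintype α] [Fintype β] [Fintype σ] [DecidableEq α] [DecidableEq β] [DecidableEq σ]
    (T : γ → ℝ) (a : γ → α) (b : γ → β) (c : γ → σ) : ℝ :=
  ∑ z, T z * Real.log
    ((marg (fun w => (a w, b w, c w)) T (a z, b z, c z) * marg c T (c z)) /
     (marg (fun w => (a w, c w)) T (a z, c z) * marg (fun w => (b w, c w)) T (b z, c z)))

/-- Total variation distance. -/
noncomputable def dvar {α : Type*} [Fintype α] (P Q : α → ℝ) : ℝ :=
  (1/2 : ℝ) * ∑ x, |P x - Q x|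

lemma sum_marg_mul {α β : Type*} [Fintype α] [Fintype β] [DecidableEq β]
    (f : α → β) (T : α → ℝ) (g : β → ℝ) :
    ∑ y, marg f T y * g y = ∑ x, T x * g (f x) := by
  unfold marg
  simp_rw [Finset.sum_mul, ite_mul, zero_mul]
  rw [Finset.sum_comm]
  refine Finset.sum_congr rfl fun x _ => ?_
  have := Finset.sum_ite_eq Finset.univ (f x) (fun y => T x * g y); simpa using this

lemma marg_nonneg {α β : Type*} [Fintype α] [DecidableEq β]
    (f : α → β) {T : α → ℝ} (hT : ∀ x, 0 ≤ T x) (y : β) : 0 ≤ marg f T y := by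
  refine Finset.sum_nonneg fun x _ => ?_
  split <;> simp [hT x]

lemma le_marg {α β : Type*} [Fintype α] [DecidableEq β]
    (f : α → β) {T : α → ℝ} (hT : ∀ x, 0 ≤ T x) (z : α) : T z ≤ marg f T (f z) := by
  unfold marg
  have := Finset.single_le_sum (f := fun x => if f x = f z then T x else 0)
    (fun x _ => by split <;> simp [hT x]) (Finset.mem_univ z)
  simpa using this

lemma sum_marg {α β : Type*} [Fintype α] [Fintype β] [DecidableEq β]
    (f : α → β) (T : α → ℝ) : ∑ y, marg f T y = ∑ x, T x := by
  simpa using sum_marg_mul f T (fun _ => 1)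

lemma gibbs_term {a b : ℝ} (ha : 0 ≤ a) (hb : 0 ≤ b) (hab : 0 < a → 0 < b) :
    a - b ≤ a * Real.log (a / b) := by
  rcases ha.eq_or_lt with h | h
  · simpa [← h] using hb
  · have hb' := hab h
    have h1 : Real.log (b / a) ≤ b / a - 1 := Real.log_le_sub_one_of_pos (by positivity)
    have h2 : Real.log (a / b) = - Real.log (b / a) := by
      rw [← Real.log_inv]; congr 1; field_simp
    have h3 : a * (b / a) = b := by field_simp
    rw [h2]
    nlinarith [mul_le_mul_of_nonneg_left h1 h.le]

@[reducible] def ZZ {ι : Type*} (X U : ι → Type*) (n : ℕ) :=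
  (∀ i, Fin n → U i) × (∀ i, Fin n → X i)

/-- restriction of a dependent function to (the subtype of) a finite set -/
@[reducible] def rA {ι : Type*} (A : Finset ι) {Y : ι → Type*} (u : ∀ i, Y i) :
    ∀ i : {j // j ∈ A}, Y i.1 := fun i => u i.1

/-- restriction of a dependent function to the complement of a finite set -/
@[reducible] def rAc {ι : Type*} (A : Finset ι) {Y : ι → Type*} (u : ∀ i, Y i) :
    ∀ i : {j // j ∉ A}, Y i.1 := fun i => u i.1

set_option maxHeartbeats 2000000 in
lemma main_ineq {ι : Type*} [Fintype ι] [DecidableEq ι] {X U : ι → Type*}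
    [∀ i, Fintype (X i)] [∀ i, DecidableEq (X i)]
    [∀ i, Fintype (U i)] [∀ i, DecidableEq (U i)]
    (n : ℕ)
    (Pn : (∀ i, Fin n → X i) → ℝ)
    (K : (∀ i, Fin n → X i) → (∀ i, Fin n → U i) → ℝ)
    (hK : ∀ x u, 0 ≤ K x u)
    (T : (∀ i, Fin n → U i) × (∀ i, Fin n → X i) → ℝ)
    (hT0 : ∀ z, 0 ≤ T z) (hT1 : ∑ z, T z = 1)
    (hsupp : ∀ z, T z ≠ 0 → 0 < Pn z.2 ∧ 0 < K z.2 z.1)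
    (A : Finset ι)
    (Q : (∀ i : {j // j ∈ A}, Fin n → X i.1) → (∀ i : {j // j ∈ A}, Fin n → U i.1) → ℝ)
    (hQpmf : ∀ xA, IsPmf (Q xA))
    (hQle : ∀ x uA, marg (fun u => fun i : {j // j ∈ A} => u i.1) (K x) uA
              ≤ Q (fun i => x i.1) uA) :
    condMI T (fun z => fun i : {j // j ∈ A} => z.1 i.1)
        (fun z => fun i : {j // j ∉ A} => z.2 i.1)
        (fun z => fun i : {j // j ∈ A} => z.2 i.1)
      + klDiv (marg Prod.snd T) Pn
      ≤ klDiv T (fun z => Pn z.2 * K z.2 z.1) := by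
  letI idec : DecidableEq (((i : { j // j ∈ A }) → Fin n → U ↑i) ×
      ((i : { j // j ∉ A }) → Fin n → X ↑i) × ((i : { j // j ∈ A }) → Fin n → X ↑i)) :=
    instDecidableEqProd
  show condMI T (fun z => rA A z.1) (fun z => rAc A z.2) (fun z => rA A z.2)
      + klDiv (marg Prod.snd T) Pn ≤ klDiv T (fun z => Pn z.2 * K z.2 z.1)
  -- basic correspondence between x and (x_{A^c}, x_A)
  have hbc : ∀ (w2 x : ∀ i, Fin n → X i),
      (rAc A w2 = rAc A x ∧ rA A w2 = rA A x) ↔ w2 = x := by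
    intro w2 x
    constructor
    · rintro ⟨h1, h2⟩
      funext i
      by_cases hi : i ∈ A
      · exact congrFun h2 ⟨i, hi⟩
      · exact congrFun h1 ⟨i, hi⟩
    · intro h; rw [h]; exact ⟨rfl, rfl⟩
  -- positivity of marginals on the support
  have hTpos : ∀ z : ZZ X U n, T z ≠ 0 → 0 < T z := fun z h => lt_of_le_of_ne (hT0 z) (Ne.symm h)
  have hm1pos : ∀ z : ZZ X U n, T z ≠ 0 →
      0 < marg (fun w : ZZ X U n => (rA A w.1, rAc A w.2, rA A w.2)) T (rA A z.1, rAc A z.2, rA A z.2) :=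
    fun z h => lt_of_lt_of_le (hTpos z h)
      (le_marg (fun w : ZZ X U n => (rA A w.1, rAc A w.2, rA A w.2)) hT0 z)
  have hm2pos : ∀ z : ZZ X U n, T z ≠ 0 → 0 < marg (fun w : ZZ X U n => rA A w.2) T (rA A z.2) :=
    fun z h => lt_of_lt_of_le (hTpos z h) (le_marg (fun w : ZZ X U n => rA A w.2) hT0 z)
  have hm3pos : ∀ z : ZZ X U n, T z ≠ 0 →
      0 < marg (fun w : ZZ X U n => (rA A w.1, rA A w.2)) T (rA A z.1, rA A z.2) :=
    fun z h => lt_of_lt_of_le (hTpos z h) (le_marg (fun w : ZZ X U n => (rA A w.1, rA A w.2)) hT0 z)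
  have hm4pos : ∀ z : ZZ X U n, T z ≠ 0 →
      0 < marg (fun w : ZZ X U n => (rAc A w.2, rA A w.2)) T (rAc A z.2, rA A z.2) :=
    fun z h => lt_of_lt_of_le (hTpos z h) (le_marg (fun w : ZZ X U n => (rAc A w.2, rA A w.2)) hT0 z)
  -- the X-marginal agrees with the (b,c) marginal
  have hm4eq : ∀ x : ∀ i, Fin n → X i,
      marg Prod.snd T x = marg (fun w : ZZ X U n => (rAc A w.2, rA A w.2)) T (rAc A x, rA A x) := by
    intro x
    unfold marg
    refine Finset.sum_congr rfl fun w _ => ?_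
    refine if_congr ?_ rfl rfl
    rw [Prod.mk.injEq]
    exact (hbc w.2 x).symm
  -- the abc marginal as a (a, id) marginal
  have hm1F : ∀ (uA : ∀ i : {j // j ∈ A}, Fin n → U i.1) (x : ∀ i, Fin n → X i),
      marg (fun w : ZZ X U n => (rA A w.1, rAc A w.2, rA A w.2)) T (uA, rAc A x, rA A x)
        = marg (fun w : ZZ X U n => (rA A w.1, w.2)) T (uA, x) := by
    intro uA x
    unfold marg
    refine Finset.sum_congr rfl fun w _ => ?_
    refine if_congr ?_ rfl rfl
    simp only [Prod.mk.injEq]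
    constructor
    · rintro ⟨h1, h2, h3⟩; exact ⟨h1, (hbc w.2 x).1 ⟨h2, h3⟩⟩
    · rintro ⟨h1, h2⟩; obtain ⟨h3, h4⟩ := (hbc w.2 x).2 h2; exact ⟨h1, h3, h4⟩
  -- rewrite condMI
  have econd : condMI T (fun z : ZZ X U n => rA A z.1) (fun z : ZZ X U n => rAc A z.2) (fun z : ZZ X U n => rA A z.2)
      = ∑ z : ZZ X U n, T z * Real.log
          ((marg (fun w : ZZ X U n => (rA A w.1, rAc A w.2, rA A w.2)) T (rA A z.1, rAc A z.2, rA A z.2)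
            * marg (fun w : ZZ X U n => rA A w.2) T (rA A z.2)) /
           (marg (fun w : ZZ X U n => (rA A w.1, rA A w.2)) T (rA A z.1, rA A z.2)
            * marg (fun w : ZZ X U n => (rAc A w.2, rA A w.2)) T (rAc A z.2, rA A z.2))) := by
    unfold condMI
    rfl
  -- rewrite the X-marginal KL
  have ekl2 : klDiv (marg Prod.snd T) Pn
      = ∑ z : ZZ X U n, T z * Real.log
          (marg (fun w : ZZ X U n => (rAc A w.2, rA A w.2)) T (rAc A z.2, rA A z.2) / Pn z.2) := by
    unfold klDiv
    rw [sum_marg_mul Prod.snd T (fun x => Real.log (marg Prod.snd T x / Pn x))]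
    refine Finset.sum_congr rfl fun z _ => ?_
    rw [hm4eq z.2]
  -- combine the two sums
  have ecomb : (∑ z : ZZ X U n, T z * Real.log
          ((marg (fun w : ZZ X U n => (rA A w.1, rAc A w.2, rA A w.2)) T (rA A z.1, rAc A z.2, rA A z.2)
            * marg (fun w : ZZ X U n => rA A w.2) T (rA A z.2)) /
           (marg (fun w : ZZ X U n => (rA A w.1, rA A w.2)) T (rA A z.1, rA A z.2)
            * marg (fun w : ZZ X U n => (rAc A w.2, rA A w.2)) T (rAc A z.2, rA A z.2))))
      + (∑ z : ZZ X U n, T z * Real.log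
          (marg (fun w : ZZ X U n => (rAc A w.2, rA A w.2)) T (rAc A z.2, rA A z.2) / Pn z.2))
      = ∑ z : ZZ X U n, T z * Real.log
          ((marg (fun w : ZZ X U n => (rA A w.1, rAc A w.2, rA A w.2)) T (rA A z.1, rAc A z.2, rA A z.2)
            * marg (fun w : ZZ X U n => rA A w.2) T (rA A z.2)) /
           (marg (fun w : ZZ X U n => (rA A w.1, rA A w.2)) T (rA A z.1, rA A z.2) * Pn z.2)) := by
    rw [← Finset.sum_add_distrib]
    refine Finset.sum_congr rfl fun z _ => ?_
    by_cases hz : T z = 0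
    · simp [hz]
    · have h1 := hm1pos z hz
      have h2 := hm2pos z hz
      have h3 := hm3pos z hz
      have h4 := hm4pos z hz
      have hPn := (hsupp z hz).1
      rw [← mul_add]
      congr 1
      rw [← Real.log_mul (by positivity) (by positivity)]
      congr 1
      field_simp
  -- collapse lemmas
  have hcoll1 : ∀ (uA : ∀ i : {j // j ∈ A}, Fin n → U i.1)
      (G : (∀ i : {j // j ∈ A}, Fin n → X i.1) → ℝ),
      ∑ x : ∀ i, Fin n → X i, marg (fun w : ZZ X U n => (rA A w.1, w.2)) T (uA, x) * G (rA A x)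
        = ∑ w : ZZ X U n, (if rA A w.1 = uA then T w * G (rA A w.2) else 0) := by
    intro uA G
    unfold marg
    simp_rw [Finset.sum_mul, ite_mul, zero_mul]
    rw [Finset.sum_comm]
    refine Finset.sum_congr rfl fun w _ => ?_
    simp_rw [Prod.mk.injEq, ite_and]
    by_cases h : rA A w.1 = uA
    · simp only [h, eq_self_iff_true, if_true]
      have := Finset.sum_ite_eq Finset.univ w.2 (fun x => T w * G (rA A x))
      simpa using this
    · simp [h]
  have hcoll2 : ∀ (G' : (∀ i : {j // j ∈ A}, Fin n → U i.1) → (∀ i : {j // j ∈ A}, Fin n → X i.1) → ℝ),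
      ∑ uA, ∑ w : ZZ X U n, (if rA A w.1 = uA then T w * G' uA (rA A w.2) else 0)
        = ∑ w : ZZ X U n, T w * G' (rA A w.1) (rA A w.2) := by
    intro G'
    rw [Finset.sum_comm]
    refine Finset.sum_congr rfl fun w _ => ?_
    have := Finset.sum_ite_eq Finset.univ (rA A w.1) (fun uA => T w * G' uA (rA A w.2))
    simpa using this
  -- the total mass of the compensating term is at most one
  have hqsum : ∑ z : ZZ X U n, K z.2 z.1 * marg (fun w : ZZ X U n => (rA A w.1, rAc A w.2, rA A w.2)) T (rA A z.1, rAc A z.2, rA A z.2) * marg (fun w : ZZ X U n => rA A w.2) T (rA A z.2) / marg (fun w : ZZ X U n => (rA A w.1, rA A w.2)) T (rA A z.1, rA A z.2) ≤ 1 := by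
    have step1 : ∑ z : ZZ X U n, K z.2 z.1 * marg (fun w : ZZ X U n => (rA A w.1, rAc A w.2, rA A w.2)) T (rA A z.1, rAc A z.2, rA A z.2) * marg (fun w : ZZ X U n => rA A w.2) T (rA A z.2) / marg (fun w : ZZ X U n => (rA A w.1, rA A w.2)) T (rA A z.1, rA A z.2)
        = ∑ x : ∀ i, Fin n → X i, ∑ uA, marg (fun u : ∀ i, Fin n → U i => rA A u) (K x) uA *
            (marg (fun w : ZZ X U n => (rA A w.1, w.2)) T (uA, x)
             * marg (fun w : ZZ X U n => rA A w.2) T (rA A x)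
             / marg (fun w : ZZ X U n => (rA A w.1, rA A w.2)) T (uA, rA A x)) := by
      rw [Fintype.sum_prod_type, Finset.sum_comm]
      refine Finset.sum_congr rfl fun x _ => ?_
      rw [sum_marg_mul (fun u : ∀ i, Fin n → U i => rA A u) (K x)
          (fun uA => marg (fun w : ZZ X U n => (rA A w.1, w.2)) T (uA, x)
             * marg (fun w : ZZ X U n => rA A w.2) T (rA A x)
             / marg (fun w : ZZ X U n => (rA A w.1, rA A w.2)) T (uA, rA A x))]
      refine Finset.sum_congr rfl fun u _ => ?_
      show K x u * marg (fun w : ZZ X U n => (rA A w.1, rAc A w.2, rA A w.2)) T (rA A u, rAc A x, rA A x)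
            * marg (fun w : ZZ X U n => rA A w.2) T (rA A x)
            / marg (fun w : ZZ X U n => (rA A w.1, rA A w.2)) T (rA A u, rA A x) = _
      rw [hm1F (rA A u) x]
      ring
    have step2 : ∑ x : ∀ i, Fin n → X i, ∑ uA, marg (fun u : ∀ i, Fin n → U i => rA A u) (K x) uA *
            (marg (fun w : ZZ X U n => (rA A w.1, w.2)) T (uA, x)
             * marg (fun w : ZZ X U n => rA A w.2) T (rA A x)
             / marg (fun w : ZZ X U n => (rA A w.1, rA A w.2)) T (uA, rA A x))
        ≤ ∑ x : ∀ i, Fin n → X i, ∑ uA, Q (rA A x) uA *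
            (marg (fun w : ZZ X U n => (rA A w.1, w.2)) T (uA, x)
             * marg (fun w : ZZ X U n => rA A w.2) T (rA A x)
             / marg (fun w : ZZ X U n => (rA A w.1, rA A w.2)) T (uA, rA A x)) := by
      refine Finset.sum_le_sum fun x _ => Finset.sum_le_sum fun uA _ => ?_
      refine mul_le_mul_of_nonneg_right (hQle x uA) ?_
      exact div_nonneg (mul_nonneg (marg_nonneg _ hT0 _) (marg_nonneg _ hT0 _)) (marg_nonneg _ hT0 _)
    have step3 : ∑ x : ∀ i, Fin n → X i, ∑ uA, Q (rA A x) uA *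
            (marg (fun w : ZZ X U n => (rA A w.1, w.2)) T (uA, x)
             * marg (fun w : ZZ X U n => rA A w.2) T (rA A x)
             / marg (fun w : ZZ X U n => (rA A w.1, rA A w.2)) T (uA, rA A x))
        = ∑ uA, ∑ x : ∀ i, Fin n → X i,
            marg (fun w : ZZ X U n => (rA A w.1, w.2)) T (uA, x) *
            (Q (rA A x) uA * marg (fun w : ZZ X U n => rA A w.2) T (rA A x)
             / marg (fun w : ZZ X U n => (rA A w.1, rA A w.2)) T (uA, rA A x)) := by
      rw [Finset.sum_comm]
      refine Finset.sum_congr rfl fun uA _ => Finset.sum_congr rfl fun x _ => ?_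
      ring
    have step4 : ∑ uA, ∑ x : ∀ i, Fin n → X i,
            marg (fun w : ZZ X U n => (rA A w.1, w.2)) T (uA, x) *
            (Q (rA A x) uA * marg (fun w : ZZ X U n => rA A w.2) T (rA A x)
             / marg (fun w : ZZ X U n => (rA A w.1, rA A w.2)) T (uA, rA A x))
        = ∑ w : ZZ X U n, T w * (Q (rA A w.2) (rA A w.1)
            * marg (fun w' : ZZ X U n => rA A w'.2) T (rA A w.2)
            / marg (fun w' : ZZ X U n => (rA A w'.1, rA A w'.2)) T (rA A w.1, rA A w.2)) := by
      rw [← hcoll2 (fun uA xA => Q xA uA * marg (fun w : ZZ X U n => rA A w.2) T xA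
            / marg (fun w : ZZ X U n => (rA A w.1, rA A w.2)) T (uA, xA))]
      refine Finset.sum_congr rfl fun uA _ => ?_
      exact hcoll1 uA (fun xA => Q xA uA * marg (fun w : ZZ X U n => rA A w.2) T xA
            / marg (fun w : ZZ X U n => (rA A w.1, rA A w.2)) T (uA, xA))
    have step5 : ∑ w : ZZ X U n, T w * (Q (rA A w.2) (rA A w.1)
            * marg (fun w' : ZZ X U n => rA A w'.2) T (rA A w.2)
            / marg (fun w' : ZZ X U n => (rA A w'.1, rA A w'.2)) T (rA A w.1, rA A w.2))
        = ∑ p : (∀ i : {j // j ∈ A}, Fin n → U i.1) × (∀ i : {j // j ∈ A}, Fin n → X i.1),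
            marg (fun w : ZZ X U n => (rA A w.1, rA A w.2)) T p *
            (Q p.2 p.1 * marg (fun w : ZZ X U n => rA A w.2) T p.2
             / marg (fun w : ZZ X U n => (rA A w.1, rA A w.2)) T p) := by
      rw [sum_marg_mul (fun w : ZZ X U n => (rA A w.1, rA A w.2)) T
          (fun p => Q p.2 p.1 * marg (fun w : ZZ X U n => rA A w.2) T p.2
             / marg (fun w : ZZ X U n => (rA A w.1, rA A w.2)) T p)]
    have step6 : ∑ p : (∀ i : {j // j ∈ A}, Fin n → U i.1) × (∀ i : {j // j ∈ A}, Fin n → X i.1),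
            marg (fun w : ZZ X U n => (rA A w.1, rA A w.2)) T p *
            (Q p.2 p.1 * marg (fun w : ZZ X U n => rA A w.2) T p.2
             / marg (fun w : ZZ X U n => (rA A w.1, rA A w.2)) T p)
        ≤ ∑ p : (∀ i : {j // j ∈ A}, Fin n → U i.1) × (∀ i : {j // j ∈ A}, Fin n → X i.1),
            Q p.2 p.1 * marg (fun w : ZZ X U n => rA A w.2) T p.2 := by
      refine Finset.sum_le_sum fun p _ => ?_
      by_cases h : marg (fun w : ZZ X U n => (rA A w.1, rA A w.2)) T p = 0
      · rw [h, zero_mul]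
        exact mul_nonneg ((hQpmf p.2).1 p.1) (marg_nonneg _ hT0 _)
      · rw [mul_comm, div_mul_cancel₀ _ h]
    have step7 : ∑ p : (∀ i : {j // j ∈ A}, Fin n → U i.1) × (∀ i : {j // j ∈ A}, Fin n → X i.1),
            Q p.2 p.1 * marg (fun w : ZZ X U n => rA A w.2) T p.2 = 1 := by
      rw [Fintype.sum_prod_type, Finset.sum_comm]
      have e : ∀ xA, ∑ uA, Q xA uA * marg (fun w : ZZ X U n => rA A w.2) T xA
          = marg (fun w : ZZ X U n => rA A w.2) T xA := by
        intro xA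
        rw [← Finset.sum_mul, (hQpmf xA).2, one_mul]
      calc ∑ xA, ∑ uA, Q xA uA * marg (fun w : ZZ X U n => rA A w.2) T xA
          = ∑ xA, marg (fun w : ZZ X U n => rA A w.2) T xA :=
            Finset.sum_congr rfl fun xA _ => e xA
        _ = ∑ w : ZZ X U n, T w := sum_marg _ T
        _ = 1 := hT1
    calc ∑ z : ZZ X U n, K z.2 z.1 * marg (fun w : ZZ X U n => (rA A w.1, rAc A w.2, rA A w.2)) T (rA A z.1, rAc A z.2, rA A z.2) * marg (fun w : ZZ X U n => rA A w.2) T (rA A z.2) / marg (fun w : ZZ X U n => (rA A w.1, rA A w.2)) T (rA A z.1, rA A z.2) = _ := step1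
      _ ≤ _ := step2
      _ = _ := step3
      _ = _ := step4
      _ = _ := step5
      _ ≤ _ := step6
      _ = 1 := step7
  -- nonnegativity of the correction term (Gibbs)
  have key : 0 ≤ ∑ z : ZZ X U n, T z * Real.log (T z / (K z.2 z.1 * marg (fun w : ZZ X U n => (rA A w.1, rAc A w.2, rA A w.2)) T (rA A z.1, rAc A z.2, rA A z.2) * marg (fun w : ZZ X U n => rA A w.2) T (rA A z.2) / marg (fun w : ZZ X U n => (rA A w.1, rA A w.2)) T (rA A z.1, rA A z.2))) := by
    have hstep : ∀ z : ZZ X U n, T z - (K z.2 z.1 * marg (fun w : ZZ X U n => (rA A w.1, rAc A w.2, rA A w.2)) T (rA A z.1, rAc A z.2, rA A z.2) * marg (fun w : ZZ X U n => rA A w.2) T (rA A z.2) / marg (fun w : ZZ X U n => (rA A w.1, rA A w.2)) T (rA A z.1, rA A z.2)) ≤ T z * Real.log (T z / (K z.2 z.1 * marg (fun w : ZZ X U n => (rA A w.1, rAc A w.2, rA A w.2)) T (rA A z.1, rAc A z.2, rA A z.2) * marg (fun w : ZZ X U n => rA A w.2) T (rA A z.2) / marg (fun w : ZZ X U n =>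 (rA A w.1, rA A w.2)) T (rA A z.1, rA A z.2))) := by
      intro z
      refine gibbs_term (hT0 z) (div_nonneg (mul_nonneg (mul_nonneg (hK _ _)
        (marg_nonneg _ hT0 _)) (marg_nonneg _ hT0 _)) (marg_nonneg _ hT0 _)) (fun h => ?_)
      have hz : T z ≠ 0 := ne_of_gt h
      have hKz := (hsupp z hz).2
      have h1 := hm1pos z hz
      have h2 := hm2pos z hz
      have h3 := hm3pos z hz
      positivity
    have h2 := Finset.sum_le_sum fun z (_ : z ∈ Finset.univ) => hstep z
    rw [Finset.sum_sub_distrib, hT1] at h2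
    linarith [hqsum]
  -- decompose the full KL divergence
  have ekl1 : klDiv T (fun z : ZZ X U n => Pn z.2 * K z.2 z.1)
      = (∑ z : ZZ X U n, T z * Real.log
          ((marg (fun w : ZZ X U n => (rA A w.1, rAc A w.2, rA A w.2)) T (rA A z.1, rAc A z.2, rA A z.2) * marg (fun w : ZZ X U n => rA A w.2) T (rA A z.2)) / (marg (fun w : ZZ X U n => (rA A w.1, rA A w.2)) T (rA A z.1, rA A z.2) * Pn z.2)))
        + ∑ z : ZZ X U n, T z * Real.log (T z / (K z.2 z.1 * marg (fun w : ZZ X U n => (rA A w.1, rAc A w.2, rA A w.2)) T (rA A z.1, rAc A z.2, rA A z.2) * marg (fun w : ZZ X U n => rA A w.2) T (rA A z.2) / marg (fun w : ZZ X U n => (rA A w.1, rA A w.2)) T (rA A z.1, rA A z.2))) := by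
    unfold klDiv
    rw [← Finset.sum_add_distrib]
    refine Finset.sum_congr rfl fun z _ => ?_
    beta_reduce
    by_cases hz : T z = 0
    · simp [hz]
    · have h1 := hm1pos z hz
      have h2 := hm2pos z hz
      have h3 := hm3pos z hz
      have hPn := (hsupp z hz).1
      have hKz := (hsupp z hz).2
      have hTz := hTpos z hz
      rw [← mul_add]
      congr 1
      generalize hA1 : marg (fun w : ZZ X U n => (rA A w.1, rAc A w.2, rA A w.2)) T (rA A z.1, rAc A z.2, rA A z.2) = a1 at h1 ⊢
      generalize hA2 : marg (fun w : ZZ X U n => rA A w.2) T (rA A z.2) = a2 at h2 ⊢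
      generalize hA3 : marg (fun w : ZZ X U n => (rA A w.1, rA A w.2)) T (rA A z.1, rA A z.2) = a3 at h3 ⊢
      generalize hKg : K z.2 z.1 = k at hKz ⊢
      generalize hPg : Pn z.2 = pp at hPn ⊢
      generalize hTg : T z = t at hTz ⊢
      rw [← Real.log_mul (by positivity) (by positivity)]
      congr 1
      field_simp
  rw [econd, ekl2, ecomb, ekl1]
  linarith [key]

/-- Change of measure: if a sub-nonsignalling strategy wins the event `C` with
probability greater than `exp(−nδ)`, then conditioning the joint measure on `C`
yields, for every proper subset `A` of provers,
`I(Ũ_Aⁿ ∧ X̃_{A^c}ⁿ | X̃_Aⁿ) + D(P̃_{X_Mⁿ} ‖ P_{X_M}ⁿ) ≤ D(P̃_{U_Mⁿ X_Mⁿ} ‖ P_{U_Mⁿ X_Mⁿ}) ≤ nδ`. -/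
theorem change_of_measure_approx_nonsignalling
    {ι : Type*} [Fintype ι] [DecidableEq ι] {X U : ι → Type*}
    [∀ i, Fintype (X i)] [∀ i, DecidableEq (X i)]
    [∀ i, Fintype (U i)] [∀ i, DecidableEq (U i)]
    (n : ℕ) (hn : 1 ≤ n) (δ : ℝ)
    (PX : (∀ i, X i) → ℝ) (hPX : IsPmf PX)
    (K : (∀ i, Fin n → X i) → (∀ i, Fin n → U i) → ℝ)
    (hKnn : ∀ x u, 0 ≤ K x u) (hKsub : ∀ x, ∑ u, K x u ≤ 1)
    (hSNS : ∀ A : Finset ι, A ≠ Finset.univ →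
      ∃ Q : (∀ i : {j // j ∈ A}, Fin n → X i.1) → (∀ i : {j // j ∈ A}, Fin n → U i.1) → ℝ,
        (∀ xA, IsPmf (Q xA)) ∧
        ∀ x uA, marg (fun u => fun i : {j // j ∈ A} => u i.1) (K x) uA
                  ≤ Q (fun i => x i.1) uA)
    (C : Finset ((∀ i, Fin n → U i) × (∀ i, Fin n → X i)))
    (hC : Real.exp (-(n * δ)) <
      ∑ z ∈ C, (∏ j, PX (fun i => z.2 i j)) * K z.2 z.1) :
    ∀ A : Finset ι, A ≠ Finset.univ →
      condMI
          (fun z : (∀ i, Fin n → U i) × (∀ i, Fin n → X i) => ((∏ j, PX (fun i => z.2 i j)) * K z.2 z.1)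
            * (if z ∈ C then 1 else 0)
            / ∑ w ∈ C, (∏ j, PX (fun i => w.2 i j)) * K w.2 w.1)
          (fun z => fun i : {j // j ∈ A} => z.1 i.1)
          (fun z => fun i : {j // j ∉ A} => z.2 i.1)
          (fun z => fun i : {j // j ∈ A} => z.2 i.1)
        + klDiv
            (marg Prod.snd
              (fun z : (∀ i, Fin n → U i) × (∀ i, Fin n → X i) => ((∏ j, PX (fun i => z.2 i j)) * K z.2 z.1)
                * (if z ∈ C then 1 else 0)
                / ∑ w ∈ C, (∏ j, PX (fun i => w.2 i j)) * K w.2 w.1))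
            (fun x => ∏ j, PX (fun i => x i j))
        ≤ klDiv
            (fun z : (∀ i, Fin n → U i) × (∀ i, Fin n → X i) => ((∏ j, PX (fun i => z.2 i j)) * K z.2 z.1)
              * (if z ∈ C then 1 else 0)
              / ∑ w ∈ C, (∏ j, PX (fun i => w.2 i j)) * K w.2 w.1)
            (fun z => (∏ j, PX (fun i => z.2 i j)) * K z.2 z.1) ∧
      klDiv
          (fun z : (∀ i, Fin n → U i) × (∀ i, Fin n → X i) => ((∏ j, PX (fun i => z.2 i j)) * K z.2 z.1)
            * (if z ∈ C then 1 else 0)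
            / ∑ w ∈ C, (∏ j, PX (fun i => w.2 i j)) * K w.2 w.1)
          (fun z => (∏ j, PX (fun i => z.2 i j)) * K z.2 z.1)
        ≤ n * δ := by
  intro A hA
  obtain ⟨Q, hQpmf, hQle⟩ := hSNS A hA
  have hS : (0:ℝ) < ∑ w ∈ C, (∏ j, PX (fun i => w.2 i j)) * K w.2 w.1 :=
    (Real.exp_pos _).trans hC
  have hPnn : ∀ z : ZZ X U n, 0 ≤ (∏ j, PX (fun i => z.2 i j)) * K z.2 z.1 :=
    fun z => mul_nonneg (Finset.prod_nonneg fun j _ => hPX.1 _) (hKnn _ _)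
  have hT0 : ∀ z : ZZ X U n, 0 ≤ ((∏ j, PX (fun i => z.2 i j)) * K z.2 z.1)
      * (if z ∈ C then 1 else 0) / ∑ w ∈ C, (∏ j, PX (fun i => w.2 i j)) * K w.2 w.1 := by
    intro z
    refine div_nonneg (mul_nonneg (hPnn z) ?_) hS.le
    split <;> norm_num
  have hsum : ∑ z : ZZ X U n, ((∏ j, PX (fun i => z.2 i j)) * K z.2 z.1)
      * (if z ∈ C then 1 else 0) = ∑ w ∈ C, (∏ j, PX (fun i => w.2 i j)) * K w.2 w.1 := by
    simp_rw [mul_ite, mul_one, mul_zero]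
    rw [Finset.sum_ite_mem, Finset.univ_inter]
  have hT1 : ∑ z : ZZ X U n, ((∏ j, PX (fun i => z.2 i j)) * K z.2 z.1)
      * (if z ∈ C then 1 else 0) / (∑ w ∈ C, (∏ j, PX (fun i => w.2 i j)) * K w.2 w.1) = 1 := by
    rw [← Finset.sum_div, hsum, div_self hS.ne']
  have hmem : ∀ z : ZZ X U n, ((∏ j, PX (fun i => z.2 i j)) * K z.2 z.1)
      * (if z ∈ C then 1 else 0) / (∑ w ∈ C, (∏ j, PX (fun i => w.2 i j)) * K w.2 w.1) ≠ 0 →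
      z ∈ C ∧ (∏ j, PX (fun i => z.2 i j)) ≠ 0 ∧ K z.2 z.1 ≠ 0 := by
    intro z h
    by_cases hc : z ∈ C
    · have hP : (∏ j, PX (fun i => z.2 i j)) * K z.2 z.1 ≠ 0 := by
        intro h0
        exact h (by rw [h0, zero_mul, zero_div])
      obtain ⟨h1, h2⟩ := mul_ne_zero_iff.mp hP
      exact ⟨hc, h1, h2⟩
    · exact absurd (by rw [if_neg hc, mul_zero, zero_div]) h
  have hsupp : ∀ z : ZZ X U n, ((∏ j, PX (fun i => z.2 i j)) * K z.2 z.1)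
      * (if z ∈ C then 1 else 0) / (∑ w ∈ C, (∏ j, PX (fun i => w.2 i j)) * K w.2 w.1) ≠ 0 →
      0 < (∏ j, PX (fun i => z.2 i j)) ∧ 0 < K z.2 z.1 := by
    intro z h
    obtain ⟨_, h1, h2⟩ := hmem z h
    exact ⟨lt_of_le_of_ne (Finset.prod_nonneg fun j _ => hPX.1 _) (Ne.symm h1),
      lt_of_le_of_ne (hKnn _ _) (Ne.symm h2)⟩
  constructor
  · exact main_ineq n (fun x => ∏ j, PX (fun i => x i j)) K hKnn _ hT0 hT1 hsupp A Q hQpmf hQle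
  · have hkl : ∀ z : ZZ X U n,
        (((∏ j, PX (fun i => z.2 i j)) * K z.2 z.1)
          * (if z ∈ C then 1 else 0) / (∑ w ∈ C, (∏ j, PX (fun i => w.2 i j)) * K w.2 w.1)) *
        Real.log ((((∏ j, PX (fun i => z.2 i j)) * K z.2 z.1)
          * (if z ∈ C then 1 else 0) / (∑ w ∈ C, (∏ j, PX (fun i => w.2 i j)) * K w.2 w.1))
            / ((∏ j, PX (fun i => z.2 i j)) * K z.2 z.1))
        = (((∏ j, PX (fun i => z.2 i j)) * K z.2 z.1)
          * (if z ∈ C then 1 else 0) / (∑ w ∈ C, (∏ j, PX (fun i => w.2 i j)) * K w.2 w.1)) *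
          (- Real.log (∑ w ∈ C, (∏ j, PX (fun i => w.2 i j)) * K w.2 w.1)) := by
      intro z
      by_cases h : ((∏ j, PX (fun i => z.2 i j)) * K z.2 z.1)
          * (if z ∈ C then 1 else 0) / (∑ w ∈ C, (∏ j, PX (fun i => w.2 i j)) * K w.2 w.1) = 0
      · rw [h, zero_mul, zero_mul]
      · obtain ⟨hc, h1, h2⟩ := hmem z h
        congr 1
        rw [← Real.log_inv]
        congr 1
        rw [if_pos hc, mul_one]
        have hP : (∏ j, PX (fun i => z.2 i j)) * K z.2 z.1 ≠ 0 := mul_ne_zero h1 h2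
        field_simp
    have e : klDiv (fun z : ZZ X U n => ((∏ j, PX (fun i => z.2 i j)) * K z.2 z.1)
          * (if z ∈ C then 1 else 0) / ∑ w ∈ C, (∏ j, PX (fun i => w.2 i j)) * K w.2 w.1)
        (fun z => (∏ j, PX (fun i => z.2 i j)) * K z.2 z.1)
        = - Real.log (∑ w ∈ C, (∏ j, PX (fun i => w.2 i j)) * K w.2 w.1) := by
      unfold klDiv
      calc _ = ∑ z : ZZ X U n, (((∏ j, PX (fun i => z.2 i j)) * K z.2 z.1)
              * (if z ∈ C then 1 else 0) / (∑ w ∈ C, (∏ j, PX (fun i => w.2 i j)) * K w.2 w.1)) *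
              (- Real.log (∑ w ∈ C, (∏ j, PX (fun i => w.2 i j)) * K w.2 w.1)) :=
            Finset.sum_congr rfl fun z _ => hkl z
        _ = (∑ z : ZZ X U n, ((∏ j, PX (fun i => z.2 i j)) * K z.2 z.1)
              * (if z ∈ C then 1 else 0) / (∑ w ∈ C, (∏ j, PX (fun i => w.2 i j)) * K w.2 w.1)) *
              (- Real.log (∑ w ∈ C, (∏ j, PX (fun i => w.2 i j)) * K w.2 w.1)) :=
            (Finset.sum_mul _ _ _).symm
        _ = - Real.log (∑ w ∈ C, (∏ j, PX (fun i => w.2 i j)) * K w.2 w.1) := by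
            rw [hT1, one_mul]
    rw [e]
    have hlt := Real.log_lt_log (Real.exp_pos (-(n * δ))) hC
    rw [Real.log_exp] at hlt
    linarith
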